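/- Let T_1 and T_2 be bounded linear operators on a complex Hilbert space H. Then ω²([[O, T_1],[T_2*, O]]) ≤ (1/2) ω([[O, (3/2)(T_1* T_1 + T_2* T_2)],[T_2* T_1, O]]), where ω² denotes the square of the numerical radius. -/

import Mathlib

open ContinuousLinearMap

/-- The numerical radius of a bounded linear operator on a complex inner product space:
`ω(T) = sup_{‖x‖ = 1} |⟨Tx, x⟩|`. -/
noncomputable def numRadius {H : Type*} [NormedAddCommGroup H] [InnerProductSpace ℂ H]
    (T : H →L[ℂ] H) : ℝ :=
  ⨆ x : {x : H // ‖x‖ = 1}, ‖(inner ℂ (T x) (x : H) : ℂ)‖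

/-- The operator matrix `[[O, A], [B, O]]` acting on the Hilbert space direct sum
`H ⊕ H`, sending `(x, y)` to `(A y, B x)`. -/
noncomputable def offDiagOp {H : Type*} [NormedAddCommGroup H] [InnerProductSpace ℂ H]
    (A B : H →L[ℂ] H) : WithLp 2 (H × H) →L[ℂ] WithLp 2 (H × H) :=
  (((WithLp.prodContinuousLinearEquiv 2 ℂ H H).symm :
        (H × H) →L[ℂ] WithLp 2 (H × H)).comp
      ((A.comp (ContinuousLinearMap.snd ℂ H H)).prod
        (B.comp (ContinuousLinearMap.fst ℂ H H)))).comp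
    ((WithLp.prodContinuousLinearEquiv 2 ℂ H H : WithLp 2 (H × H) ≃L[ℂ] H × H) :
      WithLp 2 (H × H) →L[ℂ] H × H)

namespace NumRadiusAux

variable {H : Type*} [NormedAddCommGroup H] [InnerProductSpace ℂ H]

lemma offDiagOp_fst (A B : H →L[ℂ] H) (z : WithLp 2 (H × H)) :
    (offDiagOp A B z).fst = A z.snd := rfl

lemma offDiagOp_snd (A B : H →L[ℂ] H) (z : WithLp 2 (H × H)) :
    (offDiagOp A B z).snd = B z.fst := rfl

lemma inner_offDiagOp (A B : H →L[ℂ] H) (z : WithLp 2 (H × H)) :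
    (inner ℂ (offDiagOp A B z) z : ℂ)
      = (inner ℂ (A z.snd) z.fst : ℂ) + (inner ℂ (B z.fst) z.snd : ℂ) := by
  rw [WithLp.prod_inner_apply]
  rfl

lemma numRadius_nonneg (T : H →L[ℂ] H) : 0 ≤ numRadius T :=
  Real.iSup_nonneg fun _ => norm_nonneg _

lemma norm_inner_le_numRadius (T : H →L[ℂ] H) (x : H) (hx : ‖x‖ = 1) :
    ‖(inner ℂ (T x) x : ℂ)‖ ≤ numRadius T := by
  have hb : BddAbove (Set.range fun x : {x : H // ‖x‖ = 1} =>
      ‖(inner ℂ (T x) (x : H) : ℂ)‖) := by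
    refine ⟨‖T‖, ?_⟩
    rintro r ⟨y, rfl⟩
    calc ‖(inner ℂ (T y) (y : H) : ℂ)‖ ≤ ‖T (y : H)‖ * ‖(y : H)‖ := norm_inner_le_norm _ _
      _ ≤ (‖T‖ * ‖(y : H)‖) * ‖(y : H)‖ := by gcongr; exact T.le_opNorm _
      _ = ‖T‖ := by rw [y.2]; ring
  exact le_ciSup hb (⟨x, hx⟩ : {x : H // ‖x‖ = 1})

/-- Buzano's inequality. -/
lemma buzano (a b x : H) :
    ‖(inner ℂ a x : ℂ) * (inner ℂ x b : ℂ)‖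
      ≤ ‖x‖ ^ 2 * (‖a‖ * ‖b‖ + ‖(inner ℂ a b : ℂ)‖) / 2 := by
  have h1 : (inner ℂ ((2 : ℂ) • ((inner ℂ x a : ℂ) • x) - (‖x‖ : ℂ) ^ 2 • a) b : ℂ)
      + (‖x‖ : ℂ) ^ 2 * (inner ℂ a b : ℂ)
      = 2 * ((inner ℂ a x : ℂ) * (inner ℂ x b : ℂ)) := by
    simp only [inner_sub_left, inner_smul_left, inner_conj_symm, map_ofNat, map_pow,
      Complex.conj_ofReal]
    ring
  have h2 : ‖(2 : ℂ) • ((inner ℂ x a : ℂ) • x) - (‖x‖ : ℂ) ^ 2 • a‖ = ‖x‖ ^ 2 * ‖a‖ := by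
    have hval : (inner ℂ ((2 : ℂ) • ((inner ℂ x a : ℂ) • x)) ((‖x‖ : ℂ) ^ 2 • a) : ℂ)
        = ((2 * ‖x‖ ^ 2 * ‖(inner ℂ x a : ℂ)‖ ^ 2 : ℝ) : ℂ) := by
      simp only [inner_smul_left, inner_smul_right, map_ofNat, map_pow, Complex.conj_ofReal]
      rw [mul_comm ((starRingEnd ℂ) (inner ℂ x a : ℂ)) (inner ℂ x a : ℂ), Complex.mul_conj,
        Complex.normSq_eq_norm_sq]
      push_cast
      ring
    have hre : RCLike.re (inner ℂ ((2 : ℂ) • ((inner ℂ x a : ℂ) • x)) ((‖x‖ : ℂ) ^ 2 • a) : ℂ)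
        = 2 * ‖x‖ ^ 2 * ‖(inner ℂ x a : ℂ)‖ ^ 2 := by
      rw [hval]; exact Complex.ofReal_re _
    have hsq : ‖(2 : ℂ) • ((inner ℂ x a : ℂ) • x) - (‖x‖ : ℂ) ^ 2 • a‖ ^ 2
        = (‖x‖ ^ 2 * ‖a‖) ^ 2 := by
      rw [@norm_sub_sq ℂ, hre]
      have hcx : ‖(2 : ℂ) • ((inner ℂ x a : ℂ) • x)‖ ^ 2
          = 4 * ‖(inner ℂ x a : ℂ)‖ ^ 2 * ‖x‖ ^ 2 := by
        rw [norm_smul, norm_smul, Complex.norm_ofNat]; ring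
      have hna : ‖(‖x‖ : ℂ) ^ 2 • a‖ ^ 2 = ‖x‖ ^ 4 * ‖a‖ ^ 2 := by
        rw [norm_smul, norm_pow, Complex.norm_real, Real.norm_eq_abs, abs_norm]; ring
      rw [hcx, hna]
      ring
    have h0 : (0 : ℝ) ≤ ‖x‖ ^ 2 * ‖a‖ := by positivity
    nlinarith [norm_nonneg ((2 : ℂ) • ((inner ℂ x a : ℂ) • x) - (‖x‖ : ℂ) ^ 2 • a)]
  have key : ‖2 * ((inner ℂ a x : ℂ) * (inner ℂ x b : ℂ))‖
      ≤ ‖x‖ ^ 2 * ‖a‖ * ‖b‖ + ‖x‖ ^ 2 * ‖(inner ℂ a b : ℂ)‖ := by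
    rw [← h1]
    calc ‖(inner ℂ ((2 : ℂ) • ((inner ℂ x a : ℂ) • x) - (‖x‖ : ℂ) ^ 2 • a) b : ℂ)
        + (‖x‖ : ℂ) ^ 2 * (inner ℂ a b : ℂ)‖
        ≤ ‖(inner ℂ ((2 : ℂ) • ((inner ℂ x a : ℂ) • x) - (‖x‖ : ℂ) ^ 2 • a) b : ℂ)‖
          + ‖(‖x‖ : ℂ) ^ 2 * (inner ℂ a b : ℂ)‖ := norm_add_le _ _
      _ ≤ ‖(2 : ℂ) • ((inner ℂ x a : ℂ) • x) - (‖x‖ : ℂ) ^ 2 • a‖ * ‖b‖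
          + ‖x‖ ^ 2 * ‖(inner ℂ a b : ℂ)‖ := by
          gcongr
          · exact norm_inner_le_norm _ _
          · rw [norm_mul, norm_pow, Complex.norm_real, Real.norm_eq_abs, abs_norm]
      _ = ‖x‖ ^ 2 * ‖a‖ * ‖b‖ + ‖x‖ ^ 2 * ‖(inner ℂ a b : ℂ)‖ := by rw [h2]
  rw [norm_mul] at key
  simp only [Complex.norm_ofNat] at key
  linarith [key]

/-- lower bound on the numerical radius of an off-diagonal operator matrix -/
lemma lower_bound (C D : H →L[ℂ] H) (y : H) (hy : y ≠ 0) :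
    ‖(inner ℂ (C y) y : ℂ) + (‖(inner ℂ (D y) y : ℂ)‖ : ℂ)‖
      ≤ 2 * ‖y‖ ^ 2 * numRadius (offDiagOp C D) := by
  set d : ℂ := inner ℂ (D y) y with hd
  set a : ℝ := Complex.arg d with ha
  set c : ℂ := Complex.exp ((a / 2 : ℝ) * Complex.I) with hcdef
  have hc1 : ‖c‖ = 1 := by
    rw [hcdef, Complex.norm_exp_ofReal_mul_I]
  have hconj : (starRingEnd ℂ) c = Complex.exp (((-(a / 2) : ℝ)) * Complex.I) := by
    rw [hcdef, ← Complex.exp_conj, map_mul, Complex.conj_I, Complex.conj_ofReal]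
    congr 1
    push_cast
    ring
  have hc2 : (starRingEnd ℂ) c * d = c * (‖d‖ : ℂ) := by
    have hdval : d = (‖d‖ : ℂ) * Complex.exp ((a : ℝ) * Complex.I) := by
      rw [ha]
      exact (Complex.norm_mul_exp_arg_mul_I d).symm
    rw [hconj]
    conv_lhs => rw [hdval]
    rw [mul_comm ((‖d‖ : ℂ)) _, ← mul_assoc, ← Complex.exp_add,
      show ((-(a / 2) : ℝ) : ℂ) * Complex.I + (a : ℝ) * Complex.I
        = ((a / 2 : ℝ) : ℂ) * Complex.I from by push_cast; ring,
      ← hcdef, mul_comm]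
  have hyn : (0 : ℝ) < ‖y‖ := norm_pos_iff.mpr hy
  set t : ℂ := (((Real.sqrt 2 * ‖y‖)⁻¹ : ℝ) : ℂ) with htdef
  have ht : ‖t‖ = (Real.sqrt 2 * ‖y‖)⁻¹ := by
    rw [htdef, Complex.norm_real, Real.norm_eq_abs, abs_of_pos]
    positivity
  have hs2 : Real.sqrt 2 ^ 2 = 2 := Real.sq_sqrt (by norm_num)
  have hs0 : (0 : ℝ) < Real.sqrt 2 := by positivity
  set w : WithLp 2 (H × H) := (WithLp.equiv 2 (H × H)).symm (t • c • y, t • y) with hw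
  have hwfst : w.fst = t • c • y := rfl
  have hwsnd : w.snd = t • y := rfl
  have hwn : ‖w‖ = 1 := by
    have h2 : ‖w‖ ^ 2 = 1 := by
      rw [WithLp.prod_norm_sq_eq_of_L2, hwfst, hwsnd,
        norm_smul, norm_smul, norm_smul, hc1, ht]
      field_simp
      nlinarith [hs2, hs0, hyn]
    nlinarith [norm_nonneg w]
  have hinner : (inner ℂ (offDiagOp C D w) w : ℂ)
      = ((starRingEnd ℂ) t * t) * (c * ((inner ℂ (C y) y : ℂ) + (‖d‖ : ℂ))) := by
    rw [inner_offDiagOp, hwfst, hwsnd, map_smul, map_smul, map_smul]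
    simp only [inner_smul_left, inner_smul_right, ← hd]
    linear_combination ((starRingEnd ℂ) t * t) * hc2
  have hle := norm_inner_le_numRadius (offDiagOp C D) w hwn
  rw [hinner, norm_mul, norm_mul, norm_mul, RCLike.norm_conj, hc1, ht, one_mul] at hle
  have hinv : (Real.sqrt 2 * ‖y‖)⁻¹ * (Real.sqrt 2 * ‖y‖)⁻¹ = (2 * ‖y‖ ^ 2)⁻¹ := by
    rw [← mul_inv]
    congr 1
    nlinarith [hs2]
  rw [hinv] at hle
  have hpos : (0 : ℝ) < 2 * ‖y‖ ^ 2 := by positivity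
  have := mul_le_mul_of_nonneg_left hle (le_of_lt hpos)
  calc ‖(inner ℂ (C y) y : ℂ) + ((‖d‖ : ℝ) : ℂ)‖
      = (2 * ‖y‖ ^ 2) * ((2 * ‖y‖ ^ 2)⁻¹ * ‖(inner ℂ (C y) y : ℂ) + ((‖d‖ : ℝ) : ℂ)‖) := by
        rw [← mul_assoc, mul_inv_cancel₀ (ne_of_gt hpos), one_mul]
    _ ≤ 2 * ‖y‖ ^ 2 * numRadius (offDiagOp C D) := this

end NumRadiusAux

set_option maxHeartbeats 1000000 in
theorem numRadius_sq_offDiag_le_half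
    {H : Type*} [NormedAddCommGroup H] [InnerProductSpace ℂ H] [CompleteSpace H]
    (T₁ T₂ : H →L[ℂ] H) :
    numRadius (offDiagOp T₁ (adjoint T₂)) ^ 2 ≤
      (1 / 2) * numRadius (offDiagOp
        (((3 : ℂ) / 2) • (adjoint T₁ ∘L T₁ + adjoint T₂ ∘L T₂))
        (adjoint T₂ ∘L T₁)) := by
  set S' := offDiagOp (((3 : ℂ) / 2) • (adjoint T₁ ∘L T₁ + adjoint T₂ ∘L T₂))
    (adjoint T₂ ∘L T₁) with hS'
  have hω : 0 ≤ numRadius S' := NumRadiusAux.numRadius_nonneg _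
  have hωhalf : (0 : ℝ) ≤ (1 / 2) * numRadius S' := by linarith
  have key : ∀ z : WithLp 2 (H × H), ‖z‖ = 1 →
      ‖(inner ℂ (offDiagOp T₁ (adjoint T₂) z) z : ℂ)‖ ^ 2 ≤ (1 / 2) * numRadius S' := by
    intro z hz
    have hnz : ‖z.fst‖ ^ 2 + ‖z.snd‖ ^ 2 = 1 := by
      rw [← WithLp.prod_norm_sq_eq_of_L2, hz]; norm_num
    by_cases hy : z.snd = 0
    · rw [NumRadiusAux.inner_offDiagOp, hy]
      simpa using hωhalf
    · set x := z.fst with hx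
      set y := z.snd with hyy
      set p := ‖T₁ y‖ with hp
      set q := ‖T₂ y‖ with hq
      set γ := ‖(inner ℂ (T₁ y) (T₂ y) : ℂ)‖ with hγ
      set α := ‖(inner ℂ (T₁ y) x : ℂ)‖ with hα0
      set β := ‖(inner ℂ (T₂ y) x : ℂ)‖ with hβ0
      have hf : ‖(inner ℂ (offDiagOp T₁ (adjoint T₂) z) z : ℂ)‖ ≤ α + β := by
        rw [NumRadiusAux.inner_offDiagOp, adjoint_inner_left]
        refine (norm_add_le _ _).trans ?_
        rw [norm_inner_symm x (T₂ y)]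
      have hα : α ≤ p * ‖x‖ := norm_inner_le_norm _ _
      have hβ : β ≤ q * ‖x‖ := norm_inner_le_norm _ _
      have hprod : α * β ≤ ‖x‖ ^ 2 * (p * q + γ) / 2 := by
        have hbz := NumRadiusAux.buzano (T₁ y) (T₂ y) x
        rw [norm_mul, norm_inner_symm x (T₂ y)] at hbz
        exact hbz
      -- lower bound for numRadius S'
      have hC : (inner ℂ ((((3 : ℂ) / 2) • (adjoint T₁ ∘L T₁ + adjoint T₂ ∘L T₂)) y) y : ℂ)
          = (((3 / 2) * (p ^ 2 + q ^ 2) : ℝ) : ℂ) := by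
        simp only [ContinuousLinearMap.smul_apply, ContinuousLinearMap.add_apply,
          ContinuousLinearMap.coe_comp', Function.comp_apply, inner_smul_left, inner_add_left,
          adjoint_inner_left, inner_self_eq_norm_sq_to_K, map_div₀, map_ofNat]
        push_cast
        ring_nf
        norm_cast
      have hD : (inner ℂ ((adjoint T₂ ∘L T₁) y) y : ℂ) = (inner ℂ (T₁ y) (T₂ y) : ℂ) := by
        simp only [ContinuousLinearMap.coe_comp', Function.comp_apply, adjoint_inner_left]
      have hlow := NumRadiusAux.lower_bound
        (((3 : ℂ) / 2) • (adjoint T₁ ∘L T₁ + adjoint T₂ ∘L T₂)) (adjoint T₂ ∘L T₁) y hy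
      rw [hC, hD, ← hγ, ← Complex.ofReal_add, Complex.norm_real, Real.norm_eq_abs,
        abs_of_nonneg (by positivity)] at hlow
      rw [← hS'] at hlow
      -- combine
      have hαnn : (0 : ℝ) ≤ α := norm_nonneg _
      have hβnn : (0 : ℝ) ≤ β := norm_nonneg _
      have hpnn : (0 : ℝ) ≤ p := norm_nonneg _
      have hqnn : (0 : ℝ) ≤ q := norm_nonneg _
      have hxnn : (0 : ℝ) ≤ ‖x‖ := norm_nonneg _
      have hα2 : α ^ 2 ≤ p ^ 2 * ‖x‖ ^ 2 := by nlinarith [mul_nonneg hpnn hxnn]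
      have hβ2 : β ^ 2 ≤ q ^ 2 * ‖x‖ ^ 2 := by nlinarith [mul_nonneg hqnn hxnn]
      have hstep2 : (α + β) ^ 2 ≤ ‖x‖ ^ 2 * ((3 / 2) * (p ^ 2 + q ^ 2) + γ) := by
        nlinarith [hprod, hα2, hβ2, sq_nonneg (p - q), sq_nonneg ‖x‖]
      have hK0 : (0 : ℝ) ≤ (3 / 2) * (p ^ 2 + q ^ 2) + γ := by positivity
      have hxy : ‖x‖ ^ 2 * ‖y‖ ^ 2 ≤ 1 / 4 := by
        nlinarith [sq_nonneg (‖x‖ ^ 2 - ‖y‖ ^ 2)]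
      have h1 : ‖(inner ℂ (offDiagOp T₁ (adjoint T₂) z) z : ℂ)‖ ^ 2 ≤ (α + β) ^ 2 := by
        have hfnn : (0 : ℝ) ≤ ‖(inner ℂ (offDiagOp T₁ (adjoint T₂) z) z : ℂ)‖ := norm_nonneg _
        nlinarith [hf]
      have h2 : ‖x‖ ^ 2 * ((3 / 2) * (p ^ 2 + q ^ 2) + γ)
          ≤ ‖x‖ ^ 2 * (2 * ‖y‖ ^ 2 * numRadius S') := by
        gcongr
      have h3 : ‖x‖ ^ 2 * (2 * ‖y‖ ^ 2 * numRadius S') ≤ (1 / 2) * numRadius S' := by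
        nlinarith [hxy, hω, sq_nonneg ‖x‖, sq_nonneg ‖y‖]
      linarith
  have hsup : numRadius (offDiagOp T₁ (adjoint T₂)) ≤ Real.sqrt ((1 / 2) * numRadius S') := by
    apply Real.iSup_le _ (Real.sqrt_nonneg _)
    intro z
    have hk := key z z.2
    have h0 : (0 : ℝ) ≤ ‖(inner ℂ (offDiagOp T₁ (adjoint T₂) (z : WithLp 2 (H × H))) (z : WithLp 2 (H × H)) : ℂ)‖ :=
      norm_nonneg _
    nlinarith [Real.sq_sqrt hωhalf, Real.sqrt_nonneg ((1 / 2) * numRadius S')]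
  have hfinal := pow_le_pow_left₀ (NumRadiusAux.numRadius_nonneg _) hsup 2
  rwa [Real.sq_sqrt hωhalf] at hfinal
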